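/- Let k < l be odd natural numbers and let a_j = (1 + (-1)^(⌊j/k⌋+1))/2 for 0 ≤ j ≤ l-1, where ⌊j/k⌋ denotes integer division. Then the alternating sum ∑_{i=0}^{l-1} (-1)^i a_i equals -(1/2)·⌊l/k⌋ if ⌊l/k⌋ is even, and equals -(1/2)·(⌊l/k⌋ - 1) if ⌊l/k⌋ is odd. -/

import Mathlib

open Finset

lemma block_sum (k : ℕ) (hk : Odd k) (q : ℕ) :
    ∑ i ∈ Finset.Ico (q * k) (q * k + k), (-1:ℝ)^i * ((1 + (-1:ℝ)^(i/k+1))/2)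
      = if Even q then 0 else -1 := by
  have hk0 : 0 < k := hk.pos
  rw [Finset.sum_Ico_eq_sum_range]
  simp only [add_tsub_cancel_left]
  have hdiv : ∀ t, t < k → ((q * k + t) / k) = q := by
    intro t ht
    have h1 : q * k + t = t + k * q := by ring
    rw [h1, Nat.add_mul_div_left _ _ hk0, Nat.div_eq_of_lt ht, zero_add]
  rcases Nat.even_or_odd q with h | h
  · simp only [if_pos h]
    apply Finset.sum_eq_zero
    intro t ht
    rw [Finset.mem_range] at ht
    rw [hdiv t ht]
    have : ((-1:ℝ))^(q+1) = -1 := (h.add_one).neg_one_pow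
    rw [this]
    ring
  · simp only [if_neg (Nat.not_even_iff_odd.mpr h)]
    have hqk : Odd (q * k) := h.mul hk
    have h2 : ((-1:ℝ))^(q+1) = 1 := (h.add_one).neg_one_pow
    have h3 : ∀ t, (-1:ℝ)^(q*k+t) = -(-1:ℝ)^t := by
      intro t
      rw [pow_add, hqk.neg_one_pow]
      ring
    calc ∑ t ∈ Finset.range k, (-1:ℝ)^(q*k+t) * ((1 + (-1:ℝ)^((q*k+t)/k+1))/2)
        = ∑ t ∈ Finset.range k, -(-1:ℝ)^t := by
          apply Finset.sum_congr rfl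
          intro t ht
          rw [Finset.mem_range] at ht
          rw [hdiv t ht, h2, h3]
          ring
      _ = -1 := by
          rw [Finset.sum_neg_distrib, neg_one_geom_sum, if_neg (Nat.not_even_iff_odd.mpr hk)]

lemma blocks_sum (k : ℕ) (hk : Odd k) (q : ℕ) :
    ∑ i ∈ Finset.range (q * k), (-1:ℝ)^i * ((1 + (-1:ℝ)^(i/k+1))/2)
      = -((q / 2 : ℕ) : ℝ) := by
  induction q with
  | zero => simp
  | succ q ih =>
    have h1 : (q+1) * k = q*k + k := by ring
    rw [h1, Finset.range_eq_Ico,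
      ← Finset.sum_Ico_consecutive _ (Nat.zero_le (q*k)) (Nat.le_add_right (q*k) k),
      ← Finset.range_eq_Ico, ih, block_sum k hk q]
    rcases Nat.even_or_odd q with h | h
    · obtain ⟨m, hm⟩ := h
      have : (q+1)/2 = q/2 := by omega
      rw [if_pos ⟨m, hm⟩, this]; ring
    · obtain ⟨m, hm⟩ := h
      have heq : (q+1)/2 = q/2 + 1 := by omega
      rw [if_neg (by simp [Nat.not_even_iff_odd.mpr ⟨m, hm⟩]), heq]
      push_cast
      ring

theorem stmt6 (k l : ℕ) (hk : Odd k) (hl : Odd l) (hkl : k < l) :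
    ∑ i ∈ Finset.range l, (-1 : ℝ) ^ i * ((1 + (-1 : ℝ) ^ (i / k + 1)) / 2) =
      if Even (l / k) then -(1 / 2) * ((l / k : ℕ) : ℝ)
      else -(1 / 2) * (((l / k : ℕ) : ℝ) - 1) := by
  have hk0 : 0 < k := hk.pos
  set q := l / k with hq
  set r := l % k with hr
  have hql : q * k ≤ l := Nat.div_mul_le_self l k
  have hdm : k * q + r = l := Nat.div_add_mod l k
  have hrk : r < k := Nat.mod_lt l hk0
  -- split the sum
  rw [Finset.range_eq_Ico, ← Finset.sum_Ico_consecutive _ (Nat.zero_le (q*k)) hql,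
    ← Finset.range_eq_Ico, blocks_sum k hk q]
  -- tail sum is zero
  have hc : q * k = k * q := mul_comm q k
  have hdiv : ∀ i, q * k ≤ i → i < l → i / k = q := by
    intro i h1 h2
    refine Nat.div_eq_of_lt_le h1 ?_
    have he : (q + 1) * k = q * k + k := by ring
    omega
  have htail : ∑ i ∈ Finset.Ico (q*k) l, (-1:ℝ)^i * ((1 + (-1:ℝ)^(i/k+1))/2) = 0 := by
    rcases Nat.even_or_odd q with h | h
    · apply Finset.sum_eq_zero
      intro i hi
      rw [Finset.mem_Ico] at hi
      rw [hdiv i hi.1 hi.2, (h.add_one).neg_one_pow]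
      ring
    · -- q odd, so r even, tail alternates and cancels
      obtain ⟨m, hm⟩ := h
      obtain ⟨n, hn⟩ := hl
      obtain ⟨p, hp⟩ := hk
      have hreven : Even r := by
        obtain ⟨x, hx⟩ : ∃ x, k * q = 2 * x + 1 := ⟨2*p*m + p + m, by rw [hp, hm]; ring⟩
        exact ⟨r/2, by omega⟩
      have hlen : l - q * k = r := by omega
      rw [Finset.sum_Ico_eq_sum_range]
      have hq' : Odd q := ⟨m, hm⟩
      have hqk : Odd (q * k) := hq'.mul ⟨p, hp⟩
      calc ∑ t ∈ Finset.range (l - q*k), (-1:ℝ)^(q*k+t) * ((1 + (-1:ℝ)^((q*k+t)/k+1))/2)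
          = ∑ t ∈ Finset.range r, -(-1:ℝ)^t := by
            rw [hlen]
            apply Finset.sum_congr rfl
            intro t ht
            rw [Finset.mem_range] at ht
            have h1 : q * k ≤ q * k + t := Nat.le_add_right _ _
            have h2 : q * k + t < l := by omega
            have he1 : ((-1:ℝ))^(q+1) = 1 := (hq'.add_one).neg_one_pow
            rw [hdiv _ h1 h2, pow_add, hqk.neg_one_pow, he1]
            ring
        _ = 0 := by
            rw [Finset.sum_neg_distrib, neg_one_geom_sum, if_pos hreven, neg_zero]
  rw [htail, add_zero]
  rcases Nat.even_or_odd q with h | h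
  · obtain ⟨m, hm⟩ := h
    rw [if_pos ⟨m, hm⟩]
    have : q / 2 = m := by omega
    rw [this, hm]
    push_cast
    ring
  · obtain ⟨m, hm⟩ := h
    rw [if_neg (by simp [Nat.not_even_iff_odd.mpr ⟨m, hm⟩])]
    have : q / 2 = m := by omega
    rw [this, hm]
    push_cast
    ring
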